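/- Let Λ, R̃ ∈ ℝ^{p×p} be symmetric positive definite matrices and set M = (Λ + R̃)⁻¹Λ. Then for every complex number λ with |λ| ≤ δ for some 0 < δ < 1, every eigenvalue of the complex matrix I_p - (1-λ)·M has modulus strictly less than 1; that is, I_p + (1-λ)·𝒪 is Schur stable, where 𝒪 = -(Λ+R̃)⁻¹Λ. -/

import Mathlib

open Matrix

noncomputable section

open scoped ComplexOrder

lemma posDef_map_ofReal {p : ℕ} {A : Matrix (Fin p) (Fin p) ℝ} (hA : A.PosDef) :
    (A.map Complex.ofReal).PosDef := by
  rw [posDef_iff_dotProduct_mulVec]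
  constructor
  · exact hA.1.map Complex.ofReal (fun a => (Complex.conj_ofReal a).symm)
  · intro x hx
    set y : Fin p → ℝ := fun i => (x i).re with hy
    set z : Fin p → ℝ := fun i => (x i).im with hz
    set u : Fin p → ℂ := Complex.ofRealHom ∘ y with hu
    set w : Fin p → ℂ := Complex.ofRealHom ∘ z with hw
    have hmapeq : A.map Complex.ofReal = A.map Complex.ofRealHom := rfl
    have hAu : A.map Complex.ofRealHom *ᵥ u = Complex.ofRealHom ∘ (A *ᵥ y) :=
      funext fun i => ((RingHom.map_mulVec Complex.ofRealHom A y i)).symm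
    have hAw : A.map Complex.ofRealHom *ᵥ w = Complex.ofRealHom ∘ (A *ᵥ z) :=
      funext fun i => ((RingHom.map_mulVec Complex.ofRealHom A z i)).symm
    have hxuw : x = u + Complex.I • w := by
      funext i
      simp [hu, hw, hy, hz, Pi.smul_apply, smul_eq_mul]
      rw [mul_comm]
      exact (Complex.re_add_im (x i)).symm
    have hstar : star x = u - Complex.I • w := by
      rw [hxuw]
      funext i
      simp [hu, hw, Complex.conj_ofReal, mul_comm]
      ring
    have hdot : ∀ a b : Fin p → ℝ, (Complex.ofRealHom ∘ a) ⬝ᵥ (Complex.ofRealHom ∘ b)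
        = ((a ⬝ᵥ b : ℝ) : ℂ) := fun a b => (RingHom.map_dotProduct Complex.ofRealHom a b).symm
    have hsymm : y ⬝ᵥ (A *ᵥ z) = z ⬝ᵥ (A *ᵥ y) := by
      rw [dotProduct_mulVec, ← mulVec_transpose, show Aᵀ = A from hA.1, dotProduct_comm]
    have key : star x ⬝ᵥ (A.map Complex.ofReal *ᵥ x)
        = ((y ⬝ᵥ (A *ᵥ y) + z ⬝ᵥ (A *ᵥ z) : ℝ) : ℂ) := by
      rw [hmapeq, hstar, hxuw, mulVec_add, mulVec_smul, hAu, hAw,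
        dotProduct_add, sub_dotProduct, sub_dotProduct, dotProduct_smul,
        smul_dotProduct, smul_dotProduct, dotProduct_smul, hdot, hdot, hdot, hdot, hsymm]
      simp only [smul_eq_mul, ← mul_assoc, Complex.I_mul_I]
      push_cast
      ring
    rw [key]
    rw [Complex.zero_lt_real]
    have hyz : y ≠ 0 ∨ z ≠ 0 := by
      by_contra h
      push_neg at h
      apply hx
      funext i
      have h1 := congrFun h.1 i
      have h2 := congrFun h.2 i
      simp [hy, hz] at h1 h2
      exact Complex.ext h1 h2
    have hA2 : ∀ a : Fin p → ℝ, a ≠ 0 → 0 < a ⬝ᵥ (A *ᵥ a) := fun a ha => hA.dotProduct_mulVec_pos ha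
    have hA2' : ∀ a : Fin p → ℝ, 0 ≤ a ⬝ᵥ (A *ᵥ a) := fun a => hA.posSemidef.dotProduct_mulVec_nonneg a
    rcases hyz with h | h
    · exact add_pos_of_pos_of_nonneg (hA2 y h) (hA2' z)
    · exact add_pos_of_nonneg_of_pos (hA2' y) (hA2 z h)

theorem gain_iteration_schur_stable' {p : ℕ}
    (Λ Rt : Matrix (Fin p) (Fin p) ℝ) (hΛ : Λ.PosDef) (hRt : Rt.PosDef)
    (M : Matrix (Fin p) (Fin p) ℝ) (hM : M = (Λ + Rt)⁻¹ * Λ)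
    (δ : ℝ) (hδ0 : 0 < δ) (hδ1 : δ < 1)
    (lam : ℂ) (hlam : ‖lam‖ ≤ δ) :
    ∀ μ ∈ spectrum ℂ ((1 : Matrix (Fin p) (Fin p) ℂ) - (1 - lam) • M.map Complex.ofReal),
      ‖μ‖ < 1 := by
  intro μ hμ
  set S : Matrix (Fin p) (Fin p) ℝ := Λ + Rt with hS
  have hSpd : S.PosDef := hΛ.add hRt
  set N : Matrix (Fin p) (Fin p) ℂ :=
    (1 : Matrix (Fin p) (Fin p) ℂ) - (1 - lam) • M.map Complex.ofReal with hN
  -- extract eigenvector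
  have hnotunit : ¬ IsUnit (algebraMap ℂ (Matrix (Fin p) (Fin p) ℂ) μ - N) :=
    spectrum.mem_iff.mp hμ
  rw [Matrix.isUnit_iff_isUnit_det, isUnit_iff_ne_zero, not_not] at hnotunit
  obtain ⟨v, hv0, hv⟩ := (Matrix.exists_mulVec_eq_zero_iff).mpr hnotunit
  have hmv : N *ᵥ v = μ • v := by
    have := hv
    rw [sub_mulVec, Algebra.algebraMap_eq_smul_one, smul_mulVec, one_mulVec,
      sub_eq_zero] at this
    exact this.symm
  have hlam1 : (1 : ℂ) - lam ≠ 0 := by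
    intro h
    have : lam = 1 := by linear_combination -h
    rw [this] at hlam
    simp at hlam
    linarith
  -- M v = ν v
  set ν : ℂ := (1 - μ) / (1 - lam) with hν
  have hMv : (M.map Complex.ofReal) *ᵥ v = ν • v := by
    have h1 : v - (1 - lam) • ((M.map Complex.ofReal) *ᵥ v) = μ • v := by
      rw [← hmv, hN, sub_mulVec, one_mulVec, smul_mulVec]
    have h2 : (1 - lam) • ((M.map Complex.ofReal) *ᵥ v) = (1 - μ) • v := by
      have h1' : (1 - lam) • ((M.map Complex.ofReal) *ᵥ v) = v - μ • v := by
        rw [← h1]; abel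
      rw [h1', sub_smul, one_smul]
    funext i
    have := congrFun h2 i
    simp only [Pi.smul_apply, smul_eq_mul] at this ⊢
    rw [hν, div_mul_eq_mul_div, eq_div_iff hlam1]
    linear_combination this
  -- S * M = Λ at complex level
  have hSdet : IsUnit S.det := hSpd.det_pos.ne'.isUnit
  have hSM : S * M = Λ := by
    rw [hM, ← Matrix.mul_assoc, Matrix.mul_nonsing_inv S hSdet, Matrix.one_mul]
  have hSMC : (S.map Complex.ofReal) * (M.map Complex.ofReal) = Λ.map Complex.ofReal := by
    have := congrArg (fun B => B.map (Complex.ofRealHom : ℝ →+* ℂ)) hSM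
    simp only [Matrix.map_mul] at this
    exact this
  have hΛv : (Λ.map Complex.ofReal) *ᵥ v = ν • ((S.map Complex.ofReal) *ᵥ v) := by
    rw [← hSMC, ← mulVec_mulVec, hMv, mulVec_smul]
  -- quadratic forms
  set a : ℂ := star v ⬝ᵥ ((Λ.map Complex.ofReal) *ᵥ v) with ha
  set b : ℂ := star v ⬝ᵥ ((S.map Complex.ofReal) *ᵥ v) with hb
  set r : ℂ := star v ⬝ᵥ ((Rt.map Complex.ofReal) *ᵥ v) with hr
  have hab : a = ν * b := by rw [ha, hΛv, dotProduct_smul, smul_eq_mul]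
  have hbar : b = a + r := by
    rw [hb, ha, hr, hS]
    have : (Λ + Rt).map Complex.ofReal = Λ.map Complex.ofReal + Rt.map Complex.ofReal := by
      funext i j; simp [Matrix.map_apply]
    rw [this, add_mulVec, dotProduct_add]
  have hapos : 0 < a := (posDef_map_ofReal hΛ).dotProduct_mulVec_pos hv0
  have hbpos : 0 < b := (posDef_map_ofReal hSpd).dotProduct_mulVec_pos hv0
  have hrpos : 0 < r := (posDef_map_ofReal hRt).dotProduct_mulVec_pos hv0
  -- a, b are real positive
  rw [Complex.lt_def] at hapos hbpos hrpos
  simp only [Complex.zero_re, Complex.zero_im] at hapos hbpos hrpos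
  set α : ℝ := a.re
  set β : ℝ := b.re
  have haC : a = (α : ℂ) := Complex.ext rfl hapos.2.symm
  have hbC : b = (β : ℂ) := Complex.ext rfl hbpos.2.symm
  have hβpos : 0 < β := hbpos.1
  have hαβ : α < β := by
    have : β = α + r.re := by
      have := congrArg Complex.re hbar
      simpa using this
    rw [this]
    linarith [hrpos.1]
  set t : ℝ := α / β with ht
  have hνt : ν = (t : ℂ) := by
    have hbne : b ≠ 0 := by rw [hbC]; exact_mod_cast hβpos.ne'
    have : ν = a / b := by
      field_simp [hab]
      exact hab.symm
    rw [this, haC, hbC, ht]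
    push_cast
    ring
  have ht0 : 0 < t := div_pos hapos.1 hβpos
  have ht1 : t < 1 := (div_lt_one hβpos).mpr hαβ
  -- μ = 1 - (1-lam) * ν
  have hμeq : μ = 1 - (1 - lam) * ν := by
    rw [hν]
    field_simp
    ring
  rw [hμeq, hνt]
  have : (1 : ℂ) - (1 - lam) * (t : ℂ) = ((1 - t : ℝ) : ℂ) + lam * (t : ℂ) := by
    push_cast; ring
  rw [this]
  calc ‖((1 - t : ℝ) : ℂ) + lam * (t : ℂ)‖ ≤ ‖((1 - t : ℝ) : ℂ)‖ + ‖lam * (t : ℂ)‖ :=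
        norm_add_le _ _
    _ = (1 - t) + ‖lam‖ * t := by
        rw [norm_mul, Complex.norm_real, Complex.norm_real, Real.norm_of_nonneg (by linarith),
          Real.norm_of_nonneg ht0.le]
    _ ≤ (1 - t) + δ * t := by nlinarith
    _ < 1 := by nlinarith


/-- A complex square matrix is Schur stable if every eigenvalue has modulus `< 1`. -/
def SchurStable {m : Type*} [Fintype m] [DecidableEq m] (M : Matrix m m ℂ) : Prop :=
  ∀ μ ∈ spectrum ℂ M, ‖μ‖ < 1

/-- the spectral fact underlying Lemma 1: for symmetric positive definite
`Λ, R̃` and `M = (Λ+R̃)⁻¹Λ`, every eigenvalue of `I - (1-λ)M` has modulus strictly less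
than `1`, for every complex `λ` with `|λ| ≤ δ` for some `0 < δ < 1`; that is,
`I + (1-λ)𝒪` is Schur stable where `𝒪 = -(Λ+R̃)⁻¹Λ`. -/
theorem gain_iteration_schur_stable {p : ℕ}
    (Λ Rt : Matrix (Fin p) (Fin p) ℝ) (hΛ : Λ.PosDef) (hRt : Rt.PosDef)
    (M : Matrix (Fin p) (Fin p) ℝ) (hM : M = (Λ + Rt)⁻¹ * Λ)
    (δ : ℝ) (hδ0 : 0 < δ) (hδ1 : δ < 1)
    (lam : ℂ) (hlam : ‖lam‖ ≤ δ) :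
    SchurStable ((1 : Matrix (Fin p) (Fin p) ℂ) - (1 - lam) • M.map Complex.ofReal) := by
  exact gain_iteration_schur_stable' Λ Rt hΛ hRt M hM δ hδ0 hδ1 lam hlam
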